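/- Let μ, φ, b be real numbers with μ ≠ 0. If (1+μ^2)*s ± (μ^2-1)*φ ± 4*μ*b = 0 and ∓2*(1+μ^2)*b*s - 2*β*E*φ = 0, where s = sqrt(Δ) ≥ 0 and β*E*φ satisfies the substitution relation (μ^2-1)*b - β*E = μ*φ, then φ^2 + 4*b^2 = 0, hence φ = 0 and b = 0. -/
import Mathlib

theorem stmt_2 (μ φ b β E s : ℝ) (hμ : μ ≠ 0) (hs : 0 ≤ s)
    (h1 : (1 + μ ^ 2) * s + (μ ^ 2 - 1) * φ + 4 * μ * b = 0)
    (h2 : -2 * (1 + μ ^ 2) * b * s - 2 * β * E * φ = 0)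
    (hsub : μ * φ = (μ ^ 2 - 1) * b - β * E) :
    φ ^ 2 + 4 * b ^ 2 = 0 ∧ φ = 0 ∧ b = 0 := by
  have key : μ * (φ ^ 2 + 4 * b ^ 2) = 0 := by
    linear_combination (1/2) * h2 + b * h1 + φ * hsub
  have h0 : φ ^ 2 + 4 * b ^ 2 = 0 := by
    rcases mul_eq_zero.mp key with h | h
    · exact absurd h hμ
    · exact h
  have hφ : φ = 0 := by nlinarith [sq_nonneg φ, sq_nonneg b]
  have hb : b = 0 := by nlinarith [sq_nonneg φ, sq_nonneg b]
  exact ⟨h0, hφ, hb⟩
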